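/- Let Ψ = ∑ᵢ |i⟩⟨i| ⊗ Mᵢ and Φ = ∑ᵢ |i⟩⟨i| ⊗ M'ᵢ be subnormalized classical-quantum states (the Mᵢ, M'ᵢ positive semidefinite, with ∑ᵢ Tr Mᵢ ≤ 1 and ∑ᵢ Tr M'ᵢ ≤ 1) satisfying (1/2)‖Ψ − Φ‖₁ ≤ ε. Then their canonical duplicate states Ψ' = ∑ᵢ |i⟩⟨i| ⊗ |i⟩⟨i| ⊗ vec(√Mᵢ)vec(√Mᵢ)* and Φ' = ∑ᵢ |i⟩⟨i| ⊗ |i⟩⟨i| ⊗ vec(√M'ᵢ)vec(√M'ᵢ)* satisfy (1/2)‖Ψ' − Φ'‖₁ ≤ √(2ε). -/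

import Mathlib

set_option maxHeartbeats 1000000


open Matrix
open scoped ComplexOrder Kronecker

namespace Matrix.PosSemidef

/-- The positive semidefinite square root of a positive semidefinite matrix
(the definition of the older Mathlib, removed since). -/
noncomputable def sqrt {n 𝕜 : Type*} [Fintype n] [DecidableEq n] [RCLike 𝕜]
    {A : Matrix n n 𝕜} (hA : A.PosSemidef) : Matrix n n 𝕜 :=
  hA.1.eigenvectorUnitary.1 * diagonal ((↑) ∘ (√·) ∘ hA.1.eigenvalues) *
  (star hA.1.eigenvectorUnitary : Matrix n n 𝕜)

end Matrix.PosSemidef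

/-- The trace (nuclear) norm of a complex matrix: the trace of `√(AᴴA)`. -/
noncomputable def traceNorm {n : Type*} [Fintype n] [DecidableEq n]
    (A : Matrix n n ℂ) : ℝ :=
  ((Matrix.posSemidef_conjTranspose_mul_self A).sqrt.trace).re

/-- `vec X` of a matrix `X = ∑ x_{jk} |j⟩⟨k|` is the vector `∑ x_{jk} |j⟩⊗|k⟩`. -/
def vec {n : Type*} (X : Matrix n n ℂ) : n × n → ℂ := fun p => X p.1 p.2

/-- The rank-one outer product `v v*` of a vector. -/
def outer {ι : Type*} (v : ι → ℂ) : Matrix ι ι ℂ := Matrix.vecMulVec v (star v)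

namespace Matrix.PosSemidef
section SqrtAux
open scoped MatrixOrder
variable {n : Type*} [Fintype n] [DecidableEq n] {A : Matrix n n ℂ}

lemma sqrt_eq_cfc (hA : A.PosSemidef) : hA.sqrt = CFC.sqrt A := by
  rw [CFC.sqrt_eq_real_sqrt A hA.nonneg, cfcₙ_eq_cfc, hA.1.cfc_eq, IsHermitian.cfc, Unitary.conjStarAlgAut_apply]
  rfl

lemma posSemidef_sqrt (hA : A.PosSemidef) : hA.sqrt.PosSemidef := by
  rw [sqrt_eq_cfc]; exact (CFC.sqrt_nonneg A).posSemidef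

lemma sqrt_mul_self (hA : A.PosSemidef) : hA.sqrt * hA.sqrt = A := by
  rw [sqrt_eq_cfc]; exact CFC.sqrt_mul_sqrt_self A hA.nonneg

lemma eq_sqrt_of_sq_eq {Q : Matrix n n ℂ} (hQ : Q.PosSemidef) {B : Matrix n n ℂ}
    (hB : B.PosSemidef) (h : Q ^ 2 = B) : Q = hB.sqrt := by
  rw [sqrt_eq_cfc]
  exact (CFC.sqrt_unique (by rw [← h, sq]) hQ.nonneg).symm

end SqrtAux
end Matrix.PosSemidef

namespace TNaux
variable {ι : Type*} [Fintype ι]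

noncomputable def nsq (v : ι → ℂ) : ℝ := (dotProduct (star v) v).re
noncomputable def nrm (v : ι → ℂ) : ℝ := Real.sqrt (nsq v)

lemma nsq_eq_sum (v : ι → ℂ) : nsq v = ∑ i, Complex.normSq (v i) := by
  simp [nsq, dotProduct, Complex.re_sum, Complex.normSq_apply, Complex.mul_re]

lemma nsq_nonneg (v : ι → ℂ) : 0 ≤ nsq v := by
  rw [nsq_eq_sum]; exact Finset.sum_nonneg fun i _ => Complex.normSq_nonneg _

lemma nrm_nonneg (v : ι → ℂ) : 0 ≤ nrm v := Real.sqrt_nonneg _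

lemma nrm_sq (v : ι → ℂ) : nrm v ^ 2 = nsq v := Real.sq_sqrt (nsq_nonneg v)

lemma nrm_euclid (v : ι → ℂ) : ‖(WithLp.equiv 2 (ι → ℂ)).symm v‖ = nrm v := by
  rw [EuclideanSpace.norm_eq, nrm, nsq_eq_sum]
  congr 1
  refine Finset.sum_congr rfl fun i _ => ?_
  rw [← Complex.sq_norm]
  rfl

lemma abs_dot_le (a b : ι → ℂ) :
    ‖dotProduct (star a) b‖ ≤ nrm a * nrm b := by
  rw [← nrm_euclid, ← nrm_euclid, dotProduct_comm]
  exact norm_inner_le_norm (𝕜 := ℂ) ((WithLp.equiv 2 (ι → ℂ)).symm a) ((WithLp.equiv 2 (ι → ℂ)).symm b)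

lemma re_dot_le (a b : ι → ℂ) :
    (dotProduct (star a) b).re ≤ nrm a * nrm b :=
  (Complex.re_le_norm _).trans (abs_dot_le a b)

variable [DecidableEq ι]

lemma traceNorm_eq_of_sq {A Q : Matrix ι ι ℂ} (hQ : Q.PosSemidef)
    (h : Q ^ 2 = Aᴴ * A) : traceNorm A = Q.trace.re := by
  unfold traceNorm
  rw [← hQ.eq_sqrt_of_sq_eq _ h]

lemma traceNorm_zero : traceNorm (0 : Matrix ι ι ℂ) = 0 := by
  rw [traceNorm_eq_of_sq Matrix.PosSemidef.zero (by simp)]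
  simp

lemma nsq_unitary_mulVec {U : Matrix ι ι ℂ} (hU : U ∈ Matrix.unitaryGroup ι ℂ)
    (x : ι → ℂ) : nsq (U *ᵥ x) = nsq x := by
  unfold nsq
  rw [star_mulVec, ← dotProduct_mulVec, mulVec_mulVec, ← Matrix.star_eq_conjTranspose,
    hU.1, one_mulVec]

noncomputable def cdiag (V : Matrix.unitaryGroup ι ℂ) (d : ι → ℂ) : Matrix ι ι ℂ :=
  (V : Matrix ι ι ℂ) * diagonal d * (V : Matrix ι ι ℂ)ᴴ

lemma star_mul_self' (V : Matrix.unitaryGroup ι ℂ) :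
    (V : Matrix ι ι ℂ)ᴴ * (V : Matrix ι ι ℂ) = 1 := by
  rw [← Matrix.star_eq_conjTranspose]; exact V.2.1

lemma mul_star_self' (V : Matrix.unitaryGroup ι ℂ) :
    (V : Matrix ι ι ℂ) * (V : Matrix ι ι ℂ)ᴴ = 1 := by
  rw [← Matrix.star_eq_conjTranspose]; exact V.2.2

lemma cdiag_mul (V : Matrix.unitaryGroup ι ℂ) (d e : ι → ℂ) :
    cdiag V d * cdiag V e = cdiag V (d * e) := by
  have h : cdiag V d * cdiag V e
      = (V : Matrix ι ι ℂ) * (diagonal d * (((V : Matrix ι ι ℂ)ᴴ * (V : Matrix ι ι ℂ)) *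
        (diagonal e * (V : Matrix ι ι ℂ)ᴴ))) := by
    simp [cdiag, Matrix.mul_assoc]
  rw [h, star_mul_self' V, Matrix.one_mul, ← Matrix.mul_assoc (diagonal d),
    diagonal_mul_diagonal, cdiag, Matrix.mul_assoc]
  rfl

lemma trace_cdiag (V : Matrix.unitaryGroup ι ℂ) (d : ι → ℂ) :
    (cdiag V d).trace = ∑ i, d i := by
  unfold cdiag
  rw [trace_mul_cycle, star_mul_self' V, Matrix.one_mul, trace_diagonal]

lemma posSemidef_cdiag (V : Matrix.unitaryGroup ι ℂ) {r : ι → ℝ} (hr : ∀ i, 0 ≤ r i) :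
    (cdiag V (fun i => (r i : ℂ))).PosSemidef :=
  (Matrix.PosSemidef.diagonal (fun i => Complex.zero_le_real.2 (hr i))).mul_mul_conjTranspose_same _

lemma nsq_cdiag_mulVec_le (V : Matrix.unitaryGroup ι ℂ) {d : ι → ℂ}
    (hd : ∀ i, ‖d i‖ ≤ 1) (x : ι → ℂ) :
    nsq (cdiag V d *ᵥ x) ≤ nsq x := by
  have h1 : cdiag V d *ᵥ x
      = (V : Matrix ι ι ℂ) *ᵥ (diagonal d *ᵥ ((V : Matrix ι ι ℂ)ᴴ *ᵥ x)) := by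
    simp [cdiag, mulVec_mulVec, Matrix.mul_assoc]
  have hVs : (V : Matrix ι ι ℂ)ᴴ ∈ Matrix.unitaryGroup ι ℂ := by
    rw [← Matrix.star_eq_conjTranspose]; exact Unitary.star_mem V.2
  rw [h1, nsq_unitary_mulVec V.2]
  calc nsq (diagonal d *ᵥ ((V : Matrix ι ι ℂ)ᴴ *ᵥ x))
      ≤ nsq ((V : Matrix ι ι ℂ)ᴴ *ᵥ x) := by
        rw [nsq_eq_sum, nsq_eq_sum]
        refine Finset.sum_le_sum fun i _ => ?_
        rw [mulVec_diagonal, Complex.normSq_mul]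
        have h2 : Complex.normSq (d i) ≤ 1 := by
          rw [← Complex.sq_norm]
          exact pow_le_one₀ (norm_nonneg _) (hd i)
        nlinarith [Complex.normSq_nonneg (((V : Matrix ι ι ℂ)ᴴ *ᵥ x) i),
          Complex.normSq_nonneg (d i)]
    _ = nsq x := nsq_unitary_mulVec hVs x

lemma spectral_cdiag {H : Matrix ι ι ℂ} (hH : H.IsHermitian) :
    H = cdiag hH.eigenvectorUnitary (fun i => (hH.eigenvalues i : ℂ)) := by
  conv_lhs => rw [hH.spectral_theorem]
  simp only [Unitary.conjStarAlgAut_apply, Unitary.coe_star]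
  rw [cdiag, Matrix.star_eq_conjTranspose]
  rfl

lemma trace_eq_sum_conj (V : Matrix.unitaryGroup ι ℂ) (M : Matrix ι ι ℂ) :
    M.trace = ∑ i, (((V : Matrix ι ι ℂ)ᴴ * M * (V : Matrix ι ι ℂ)) i i) := by
  have h : ((V : Matrix ι ι ℂ)ᴴ * M * (V : Matrix ι ι ℂ)).trace = M.trace := by
    rw [trace_mul_cycle, mul_star_self' V, Matrix.one_mul]
  rw [← h]; rfl

lemma diag_conj_entry (V : Matrix.unitaryGroup ι ℂ) (M : Matrix ι ι ℂ) (i : ι) :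
    ((V : Matrix ι ι ℂ)ᴴ * M * (V : Matrix ι ι ℂ)) i i
      = dotProduct (star (fun a => (V : Matrix ι ι ℂ) a i))
          (M *ᵥ (fun a => (V : Matrix ι ι ℂ) a i)) := by
  simp only [mul_apply, conjTranspose_apply, dotProduct, mulVec, Pi.star_apply,
    Finset.sum_mul, Finset.mul_sum]
  rw [Finset.sum_comm]
  simp [mul_assoc]

lemma nsq_eigenvector {H : Matrix ι ι ℂ} (hH : H.IsHermitian) (i : ι) :
    nsq (fun a => (hH.eigenvectorUnitary : Matrix ι ι ℂ) a i) = 1 := by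
  have hb : (fun a => (hH.eigenvectorUnitary : Matrix ι ι ℂ) a i)
      = ⇑(hH.eigenvectorBasis i) := funext fun a => rfl
  have h1 : nrm (fun a => (hH.eigenvectorUnitary : Matrix ι ι ℂ) a i) = 1 := by
    rw [← nrm_euclid, hb]
    exact hH.eigenvectorBasis.orthonormal.1 i
  have := nrm_sq (fun a => (hH.eigenvectorUnitary : Matrix ι ι ℂ) a i)
  rw [h1] at this
  simpa using this.symm

lemma re_trace_mul_le_traceNorm (S A : Matrix ι ι ℂ)
    (hS : ∀ v, nsq (S *ᵥ v) ≤ nsq v) :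
    ((S * A).trace).re ≤ traceNorm A := by
  have hP : (Aᴴ * A).PosSemidef := posSemidef_conjTranspose_mul_self A
  set hH := hP.1 with hHdef
  set W := hH.eigenvectorUnitary with hWdef
  set μ := hH.eigenvalues with hμdef
  have hμ : ∀ i, 0 ≤ μ i := hP.eigenvalues_nonneg
  have htn : traceNorm A = ∑ i, Real.sqrt (μ i) := by
    have hQ : (cdiag W (fun i => (Real.sqrt (μ i) : ℂ))).PosSemidef :=
      posSemidef_cdiag W (fun i => Real.sqrt_nonneg _)
    have hsq : (cdiag W (fun i => (Real.sqrt (μ i) : ℂ))) ^ 2 = Aᴴ * A := by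
      rw [pow_two, cdiag_mul]
      have h2 : (fun i => (Real.sqrt (μ i) : ℂ)) * (fun i => (Real.sqrt (μ i) : ℂ))
          = fun i => (μ i : ℂ) := by
        funext i
        simp only [Pi.mul_apply, ← Complex.ofReal_mul, Real.mul_self_sqrt (hμ i)]
      rw [h2, ← spectral_cdiag hH]
    rw [traceNorm_eq_of_sq hQ hsq, trace_cdiag, ← Complex.ofReal_sum, Complex.ofReal_re]
  rw [htn, trace_eq_sum_conj W (S * A), Complex.re_sum]
  refine Finset.sum_le_sum fun i _ => ?_
  rw [diag_conj_entry]
  set w := (fun a => (W : Matrix ι ι ℂ) a i) with hw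
  have hw1 : nrm w = 1 := by
    rw [nrm, nsq_eigenvector hH i, Real.sqrt_one]
  have hAw : nsq (A *ᵥ w) = μ i := by
    unfold nsq
    rw [star_mulVec, ← dotProduct_mulVec, mulVec_mulVec]
    have hwb : w = ⇑(hH.eigenvectorBasis i) := funext fun a => rfl
    have : (Aᴴ * A) *ᵥ w = μ i • w := by
      rw [hwb]; exact hH.mulVec_eigenvectorBasis i
    rw [this, dotProduct_smul]
    have : (star w ⬝ᵥ w).re = 1 := nsq_eigenvector hH i
    rw [Complex.real_smul, Complex.re_ofReal_mul, this, mul_one]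
  calc (star w ⬝ᵥ ((S * A) *ᵥ w)).re
      ≤ nrm w * nrm ((S * A) *ᵥ w) := re_dot_le _ _
    _ = nrm (S *ᵥ (A *ᵥ w)) := by rw [hw1, one_mul, ← mulVec_mulVec]
    _ ≤ nrm (A *ᵥ w) := Real.sqrt_le_sqrt (hS _)
    _ = Real.sqrt (μ i) := by rw [nrm, hAw]

noncomputable def sgn (r : ι → ℝ) : ι → ℂ := fun i => if 0 ≤ r i then 1 else -1

lemma abs_sgn (r : ι → ℝ) (i : ι) : ‖sgn r i‖ ≤ 1 := by
  unfold sgn; split <;> simp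

lemma sgn_mul (r : ι → ℝ) (i : ι) : sgn r i * (r i : ℂ) = ((|r i| : ℝ) : ℂ) := by
  unfold sgn
  split
  · next h => rw [one_mul, abs_of_nonneg h]
  · next h =>
      rw [neg_one_mul, ← Complex.ofReal_neg, abs_of_neg (lt_of_not_ge h)]

lemma trace_diagonal_mul' (d : ι → ℂ) (N : Matrix ι ι ℂ) :
    (diagonal d * N).trace = ∑ i, d i * N i i := by
  show ∑ i, (diagonal d * N) i i = _
  exact Finset.sum_congr rfl fun i _ => by rw [Matrix.diagonal_mul]

lemma trace_cdiag_mul (V : Matrix.unitaryGroup ι ℂ) (d : ι → ℂ) (M : Matrix ι ι ℂ) :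
    (cdiag V d * M).trace
      = ∑ i, d i * (((V : Matrix ι ι ℂ)ᴴ * M * (V : Matrix ι ι ℂ)) i i) := by
  have h : cdiag V d * M
      = (V : Matrix ι ι ℂ) * (diagonal d * ((V : Matrix ι ι ℂ)ᴴ * M)) := by
    simp [cdiag, Matrix.mul_assoc]
  rw [h, trace_mul_comm, Matrix.mul_assoc, trace_diagonal_mul']

lemma traceNorm_hermitian {H : Matrix ι ι ℂ} (hH : H.IsHermitian) :
    traceNorm H = ∑ i, |hH.eigenvalues i| := by
  have hQ : (cdiag hH.eigenvectorUnitary (fun i => ((|hH.eigenvalues i| : ℝ) : ℂ))).PosSemidef :=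
    posSemidef_cdiag _ (fun i => abs_nonneg _)
  have hsq : (cdiag hH.eigenvectorUnitary (fun i => ((|hH.eigenvalues i| : ℝ) : ℂ))) ^ 2
      = Hᴴ * H := by
    rw [pow_two, cdiag_mul, hH.eq]
    have h2 : (fun i => ((|hH.eigenvalues i| : ℝ) : ℂ)) * (fun i => ((|hH.eigenvalues i| : ℝ) : ℂ))
        = (fun i => (hH.eigenvalues i : ℂ)) * (fun i => (hH.eigenvalues i : ℂ)) := by
      funext i
      simp only [Pi.mul_apply, ← Complex.ofReal_mul, abs_mul_abs_self]
    rw [h2, ← cdiag_mul, ← spectral_cdiag hH]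
  rw [traceNorm_eq_of_sq hQ hsq, trace_cdiag, ← Complex.ofReal_sum, Complex.ofReal_re]

lemma re_trace_sign {H : Matrix ι ι ℂ} (hH : H.IsHermitian) :
    ((cdiag hH.eigenvectorUnitary (sgn hH.eigenvalues) * H).trace).re = traceNorm H := by
  have h1 : cdiag hH.eigenvectorUnitary (sgn hH.eigenvalues) * H
      = cdiag hH.eigenvectorUnitary (fun i => ((|hH.eigenvalues i| : ℝ) : ℂ)) := by
    refine (congrArg (fun X => cdiag hH.eigenvectorUnitary (sgn hH.eigenvalues) * X)
      (spectral_cdiag hH)).trans ?_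
    rw [cdiag_mul]
    exact congrArg _ (funext fun i => sgn_mul _ i)
  rw [h1, trace_cdiag, ← Complex.ofReal_sum, Complex.ofReal_re, traceNorm_hermitian hH]

lemma traceNorm_herm_le {H R₁ R₂ : Matrix ι ι ℂ} (hH : H.IsHermitian) (hd : H = R₁ + R₂) :
    traceNorm H ≤ traceNorm R₁ + traceNorm R₂ := by
  have hcon : ∀ v, nsq (cdiag hH.eigenvectorUnitary (sgn hH.eigenvalues) *ᵥ v) ≤ nsq v :=
    fun v => nsq_cdiag_mulVec_le _ (abs_sgn hH.eigenvalues) v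
  calc traceNorm H
      = ((cdiag hH.eigenvectorUnitary (sgn hH.eigenvalues) * H).trace).re :=
        (re_trace_sign hH).symm
    _ = ((cdiag hH.eigenvectorUnitary (sgn hH.eigenvalues) * R₁).trace).re
        + ((cdiag hH.eigenvectorUnitary (sgn hH.eigenvalues) * R₂).trace).re := by
        have e : cdiag hH.eigenvectorUnitary (sgn hH.eigenvalues) * H
            = cdiag hH.eigenvectorUnitary (sgn hH.eigenvalues) * R₁
              + cdiag hH.eigenvectorUnitary (sgn hH.eigenvalues) * R₂ :=
          (congrArg (fun X => cdiag hH.eigenvectorUnitary (sgn hH.eigenvalues) * X) hd).trans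
            (mul_add _ _ _)
        rw [e, trace_add, Complex.add_re]
    _ ≤ traceNorm R₁ + traceNorm R₂ :=
        add_le_add (re_trace_mul_le_traceNorm _ _ hcon) (re_trace_mul_le_traceNorm _ _ hcon)

lemma powers_stormer {A B : Matrix ι ι ℂ} (hA : A.PosSemidef) (hB : B.PosSemidef) :
    (((hA.sqrt - hB.sqrt) * (hA.sqrt - hB.sqrt)).trace).re ≤ traceNorm (A - B) := by
  set C := hA.sqrt - hB.sqrt with hCdef
  set D := hA.sqrt + hB.sqrt with hDdef
  have hC : C.IsHermitian := (hA.posSemidef_sqrt.1).sub (hB.posSemidef_sqrt.1)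
  set S := cdiag hC.eigenvectorUnitary (sgn hC.eigenvalues) with hSdef
  set G := cdiag hC.eigenvectorUnitary (fun i => ((|hC.eigenvalues i| : ℝ) : ℂ)) with hGdef
  have hcon : ∀ v, nsq (S *ᵥ v) ≤ nsq v :=
    fun v => nsq_cdiag_mulVec_le _ (abs_sgn hC.eigenvalues) v
  -- `(C*C).trace.re = ∑ λ²`
  have hCC : ((C * C).trace).re = ∑ i, hC.eigenvalues i ^ 2 := by
    have h1 : C * C = cdiag hC.eigenvectorUnitary
        ((fun i => (hC.eigenvalues i : ℂ)) * (fun i => (hC.eigenvalues i : ℂ))) := by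
      conv_lhs => rw [spectral_cdiag hC]
      rw [cdiag_mul]
    rw [h1, trace_cdiag]
    simp only [Pi.mul_apply, ← Complex.ofReal_mul]
    rw [← Complex.ofReal_sum, Complex.ofReal_re]
    simp [pow_two]
  -- S * C = C * S = G
  have hSC : S * C = G := by
    refine (congrArg (fun X => S * X) (spectral_cdiag hC)).trans ?_
    rw [hSdef, cdiag_mul, hGdef]
    exact congrArg _ (funext fun i => sgn_mul _ i)
  have hCS : C * S = G := by
    refine (congrArg (fun X => X * S) (spectral_cdiag hC)).trans ?_
    rw [hSdef, cdiag_mul, hGdef]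
    refine congrArg _ (funext fun i => ?_)
    rw [Pi.mul_apply, mul_comm]
    exact sgn_mul _ i
  -- `S*(A-B)` and `G*D` have the same trace
  have hid : (A - B) + (A - B) = C * D + D * C := by
    rw [hCdef, hDdef]
    conv_lhs => rw [← hA.sqrt_mul_self, ← hB.sqrt_mul_self]
    noncomm_ring
  have htr : (S * (A - B)).trace = (G * D).trace := by
    have h2 : (S * (A - B)).trace + (S * (A - B)).trace
        = (G * D).trace + (G * D).trace := by
      rw [← trace_add, ← mul_add, hid, mul_add, ← Matrix.mul_assoc, ← Matrix.mul_assoc,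
        hSC, trace_add]
      rw [add_right_inj]
      rw [Matrix.mul_assoc, trace_mul_comm S (D * C), Matrix.mul_assoc,
        trace_mul_comm D (C * S), hCS]
    have h3 : (2 : ℂ) * (S * (A - B)).trace = (2 : ℂ) * (G * D).trace := by
      rw [two_mul, two_mul]; exact h2
    exact mul_left_cancel₀ (two_ne_zero : (2 : ℂ) ≠ 0) h3
  -- lower bound for `(G*D).trace.re`
  have hGD : ∑ i, hC.eigenvalues i ^ 2 ≤ ((G * D).trace).re := by
    have h3 : (G * D).trace = ∑ i, ((|hC.eigenvalues i| : ℝ) : ℂ)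
        * (((hC.eigenvectorUnitary : Matrix ι ι ℂ)ᴴ * D
            * (hC.eigenvectorUnitary : Matrix ι ι ℂ)) i i) := by
      rw [hGdef, trace_cdiag_mul]
    rw [h3, Complex.re_sum]
    refine Finset.sum_le_sum fun i _ => ?_
    rw [Complex.re_ofReal_mul, diag_conj_entry]
    set w := (fun a => (hC.eigenvectorUnitary : Matrix ι ι ℂ) a i) with hw
    have hwb : w = ⇑(hC.eigenvectorBasis i) := funext fun a => rfl
    have hCw : (star w ⬝ᵥ C *ᵥ w).re = hC.eigenvalues i := by
      have h4 : C *ᵥ w = hC.eigenvalues i • w := by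
        rw [hwb]; exact hC.mulVec_eigenvectorBasis i
      have h6 : (star w ⬝ᵥ w).re = 1 := nsq_eigenvector hC i
      rw [h4, dotProduct_smul, Complex.real_smul, Complex.re_ofReal_mul, h6, mul_one]
    have hplus : 0 ≤ (star w ⬝ᵥ (D + C) *ᵥ w).re := by
      have : (D + C).PosSemidef := by
        have h5 : D + C = hA.sqrt + hA.sqrt := by rw [hCdef, hDdef]; abel
        rw [h5]; exact hA.posSemidef_sqrt.add hA.posSemidef_sqrt
      exact this.re_dotProduct_nonneg w
    have hminus : 0 ≤ (star w ⬝ᵥ (D - C) *ᵥ w).re := by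
      have : (D - C).PosSemidef := by
        have h5 : D - C = hB.sqrt + hB.sqrt := by rw [hCdef, hDdef]; abel
        rw [h5]; exact hB.posSemidef_sqrt.add hB.posSemidef_sqrt
      exact this.re_dotProduct_nonneg w
    have hDwre : |hC.eigenvalues i| ≤ (star w ⬝ᵥ D *ᵥ w).re := by
      rw [add_mulVec, dotProduct_add, Complex.add_re, hCw] at hplus
      rw [sub_mulVec, dotProduct_sub, Complex.sub_re, hCw] at hminus
      rw [abs_le]
      constructor <;> linarith
    have habs : 0 ≤ |hC.eigenvalues i| := abs_nonneg _
    calc hC.eigenvalues i ^ 2 = |hC.eigenvalues i| * |hC.eigenvalues i| := by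
          rw [abs_mul_abs_self, pow_two]
      _ ≤ |hC.eigenvalues i| * (star w ⬝ᵥ D *ᵥ w).re := by
          exact mul_le_mul_of_nonneg_left hDwre habs
  -- conclude
  calc ((C * C).trace).re = ∑ i, hC.eigenvalues i ^ 2 := hCC
    _ ≤ ((G * D).trace).re := hGD
    _ = ((S * (A - B)).trace).re := by rw [htr]
    _ ≤ traceNorm (A - B) := re_trace_mul_le_traceNorm _ _ hcon

lemma vecMulVec_mul' (a b c d : ι → ℂ) :
    vecMulVec a b * vecMulVec c d = (b ⬝ᵥ c) • vecMulVec a d := by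
  ext i j
  simp only [mul_apply, vecMulVec_apply, Matrix.smul_apply, dotProduct, smul_eq_mul, Finset.sum_mul]
  exact Finset.sum_congr rfl fun x _ => by ring

lemma conjTranspose_vecMulVec (u v : ι → ℂ) :
    (vecMulVec u (star v))ᴴ = vecMulVec v (star u) := by
  ext i j
  simp [conjTranspose_apply, vecMulVec_apply, mul_comm]

lemma outer_mulVec (w x : ι → ℂ) :
    vecMulVec w (star w) *ᵥ x = (star w ⬝ᵥ x) • w := by
  ext i
  simp only [mulVec, vecMulVec_apply, dotProduct, Pi.smul_apply, smul_eq_mul, Finset.sum_mul]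
  exact Finset.sum_congr rfl fun j _ => by ring

lemma posSemidef_outer (w : ι → ℂ) : (vecMulVec w (star w)).PosSemidef := by
  exact posSemidef_vecMulVec_self_star w

lemma dot_star_self (y : ι → ℂ) : dotProduct (star y) y = ((nsq y : ℝ) : ℂ) := by
  rw [nsq_eq_sum, Complex.ofReal_sum]
  exact Finset.sum_congr rfl fun i _ => by
    rw [Pi.star_apply, Complex.star_def, mul_comm, Complex.mul_conj]

lemma trace_outer (y : ι → ℂ) : (vecMulVec y (star y)).trace = ((nsq y : ℝ) : ℂ) := by
  rw [nsq_eq_sum, Complex.ofReal_sum]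
  show ∑ i, (vecMulVec y (star y)).diag i = _
  exact Finset.sum_congr rfl fun i _ => by
    rw [Matrix.diag_apply, vecMulVec_apply, Pi.star_apply, Complex.star_def, Complex.mul_conj]

lemma nsq_smul (c : ℝ) (y : ι → ℂ) : nsq ((c : ℂ) • y) = c ^ 2 * nsq y := by
  rw [nsq_eq_sum, nsq_eq_sum, Finset.mul_sum]
  refine Finset.sum_congr rfl fun i _ => ?_
  rw [Pi.smul_apply, smul_eq_mul, Complex.normSq_mul, Complex.normSq_ofReal, pow_two]

lemma outer_smul (c : ℝ) (y : ι → ℂ) :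
    vecMulVec ((c : ℂ) • y) (star ((c : ℂ) • y)) = ((c ^ 2 : ℝ) : ℂ) • vecMulVec y (star y) := by
  ext i j
  simp only [vecMulVec_apply, Pi.smul_apply, smul_eq_mul, Matrix.smul_apply, Pi.star_apply,
    star_mul', Complex.star_def, Complex.conj_ofReal]
  push_cast
  ring

lemma nrm_pos_of_ne (v : ι → ℂ) (hv : v ≠ 0) : 0 < nrm v := by
  have h1 : 0 < nsq v := by
    rw [nsq_eq_sum]
    obtain ⟨i, hi⟩ := Function.ne_iff.1 hv
    refine Finset.sum_pos' (fun j _ => Complex.normSq_nonneg _) ⟨i, Finset.mem_univ i, ?_⟩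
    exact Complex.normSq_pos.2 hi
  exact Real.sqrt_pos.2 h1

lemma traceNorm_vecMulVec_le (u v : ι → ℂ) :
    traceNorm (vecMulVec u (star v)) ≤ nrm u * nrm v := by
  by_cases hv : v = 0
  · have h0 : vecMulVec u (star v) = 0 := by
      ext i j; simp [vecMulVec_apply, hv]
    rw [h0, traceNorm_zero]
    exact mul_nonneg (nrm_nonneg u) (nrm_nonneg v)
  · have hnv : 0 < nrm v := nrm_pos_of_ne v hv
    set r : ℝ := nrm u / nrm v with hr
    have hr0 : 0 ≤ r := div_nonneg (nrm_nonneg u) (le_of_lt hnv)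
    set c : ℝ := Real.sqrt r with hc
    set w : ι → ℂ := (c : ℂ) • v with hwdef
    have hcsq : c ^ 2 = r := Real.sq_sqrt hr0
    have hQ : (vecMulVec w (star w)).PosSemidef := posSemidef_outer w
    have hsq : (vecMulVec w (star w)) ^ 2 = (vecMulVec u (star v))ᴴ * (vecMulVec u (star v)) := by
      rw [pow_two, vecMulVec_mul', conjTranspose_vecMulVec, vecMulVec_mul',
        dot_star_self, dot_star_self, hwdef, outer_smul, smul_smul]
      have harg : ((nsq ((c : ℂ) • v) : ℝ) : ℂ) * ((c ^ 2 : ℝ) : ℂ) = ((nsq u : ℝ) : ℂ) := by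
        rw [nsq_smul, ← Complex.ofReal_mul]
        congr 1
        have h2 : nsq v = nrm v ^ 2 := (nrm_sq v).symm
        have h3 : nsq u = nrm u ^ 2 := (nrm_sq u).symm
        rw [hcsq, hr, h2, h3]
        field_simp
      rw [harg]
    rw [traceNorm_eq_of_sq hQ hsq, trace_outer, Complex.ofReal_re, hwdef, nsq_smul, hcsq]
    have h2 : nsq v = nrm v ^ 2 := (nrm_sq v).symm
    rw [hr, h2]
    have h4 : nrm u / nrm v * nrm v ^ 2 = nrm u * nrm v := by
      field_simp
    exact le_of_eq h4

end TNaux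

namespace TNaux
section Kron
variable {p m : Type*} [Fintype p] [Fintype m] [DecidableEq p] [DecidableEq m]

lemma kron_conjTranspose (A : Matrix p p ℂ) (B : Matrix m m ℂ) :
    (A ⊗ₖ B)ᴴ = Aᴴ ⊗ₖ Bᴴ := by
  ext ⟨i, j⟩ ⟨k, l⟩
  simp only [conjTranspose_apply, kroneckerMap_apply, star_mul']

lemma kron_sub (A : Matrix p p ℂ) (B C : Matrix m m ℂ) :
    A ⊗ₖ (B - C) = A ⊗ₖ B - A ⊗ₖ C := by
  ext ⟨i, j⟩ ⟨k, l⟩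
  simp only [kroneckerMap_apply, Matrix.sub_apply]
  ring

lemma posSemidef_kron {A : Matrix p p ℂ} {B : Matrix m m ℂ}
    (hA : A.PosSemidef) (hB : B.PosSemidef) : (A ⊗ₖ B).PosSemidef := by
  exact hA.kronecker hB

lemma traceNorm_sum_kron {κ : Type*} [Fintype κ] [DecidableEq κ] (P : κ → Matrix p p ℂ)
    (D : κ → Matrix m m ℂ) (hP : ∀ i, (P i).PosSemidef)
    (hPtr : ∀ i, (P i).trace = 1)
    (hPmul : ∀ i j, P i * P j = if i = j then P i else 0) :
    traceNorm (∑ i, P i ⊗ₖ D i) = ∑ i, traceNorm (D i) := by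
  have key : ∀ (F G : κ → Matrix m m ℂ),
      (∑ i, P i ⊗ₖ F i) * (∑ j, P j ⊗ₖ G j) = ∑ i, P i ⊗ₖ (F i * G i) := by
    intro F G
    calc (∑ i, P i ⊗ₖ F i) * (∑ j, P j ⊗ₖ G j)
        = ∑ i, ∑ j, (P i * P j) ⊗ₖ (F i * G j) := by
          rw [Finset.sum_mul_sum]
          exact Finset.sum_congr rfl fun i _ => Finset.sum_congr rfl fun j _ =>
            (mul_kronecker_mul _ _ _ _).symm
      _ = ∑ i, P i ⊗ₖ (F i * G i) := by
          refine Finset.sum_congr rfl fun i _ => ?_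
          rw [Finset.sum_eq_single i]
          · rw [hPmul i i, if_pos rfl]
          · intro j _ hj
            rw [hPmul i j, if_neg (fun h => hj h.symm), Matrix.zero_kronecker]
          · intro h
            exact absurd (Finset.mem_univ i) h
  set Q : Matrix (p × m) (p × m) ℂ :=
    ∑ i, P i ⊗ₖ (posSemidef_conjTranspose_mul_self (D i)).sqrt with hQ
  have hQP : Q.PosSemidef := by
    rw [hQ]
    refine Finset.sum_induction _ _ (fun a b ha hb => ha.add hb) Matrix.PosSemidef.zero ?_
    exact fun i _ =>
      posSemidef_kron (hP i) (posSemidef_conjTranspose_mul_self (D i)).posSemidef_sqrt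
  have hsq : Q ^ 2 = (∑ i, P i ⊗ₖ D i)ᴴ * (∑ i, P i ⊗ₖ D i) := by
    have hDh : (∑ i, P i ⊗ₖ D i)ᴴ = ∑ i, P i ⊗ₖ (D i)ᴴ := by
      rw [conjTranspose_sum]
      exact Finset.sum_congr rfl fun i _ => by rw [kron_conjTranspose, (hP i).1]
    rw [pow_two, hQ, key, hDh, key]
    exact Finset.sum_congr rfl fun i _ => by
      rw [(posSemidef_conjTranspose_mul_self (D i)).sqrt_mul_self]
  rw [traceNorm_eq_of_sq hQP hsq, hQ, trace_sum, Complex.re_sum]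
  refine Finset.sum_congr rfl fun i _ => ?_
  rw [trace_kronecker, hPtr i, one_mul]
  rfl

end Kron

section Main
variable {ι : Type*} [Fintype ι]

lemma outer_sub_outer (ψ φ : ι → ℂ) :
    outer ψ - outer φ = vecMulVec ψ (star (ψ - φ)) + vecMulVec (ψ - φ) (star φ) := by
  ext i j
  simp only [outer, Matrix.sub_apply, Matrix.add_apply, vecMulVec_apply, Pi.star_apply, Pi.sub_apply, star_sub]
  ring

lemma outer_diff_traceNorm_le [DecidableEq ι] (ψ φ : ι → ℂ) :
    traceNorm (outer ψ - outer φ) ≤ (nrm ψ + nrm φ) * nrm (ψ - φ) := by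
  have hherm : (outer ψ - outer φ).IsHermitian :=
    ((posSemidef_outer ψ).1).sub ((posSemidef_outer φ).1)
  calc traceNorm (outer ψ - outer φ)
      ≤ traceNorm (vecMulVec ψ (star (ψ - φ))) + traceNorm (vecMulVec (ψ - φ) (star φ)) :=
        traceNorm_herm_le hherm (outer_sub_outer ψ φ)
    _ ≤ nrm ψ * nrm (ψ - φ) + nrm (ψ - φ) * nrm φ :=
        add_le_add (traceNorm_vecMulVec_le _ _) (traceNorm_vecMulVec_le _ _)
    _ = (nrm ψ + nrm φ) * nrm (ψ - φ) := by ring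

lemma nsq_vec {m : Type*} [Fintype m] (X : Matrix m m ℂ) :
    nsq (_root_.vec X) = ((Xᴴ * X).trace).re := by
  have h1 : (Xᴴ * X).trace = ∑ i, ∑ j, star (X j i) * X j i := by
    show ∑ i, (Xᴴ * X).diag i = _
    refine Finset.sum_congr rfl fun i _ => ?_
    simp [Matrix.diag_apply, mul_apply, conjTranspose_apply]
  have h2 : nsq (_root_.vec X) = ∑ a, ∑ b, Complex.normSq (X a b) := by
    rw [nsq_eq_sum, Fintype.sum_prod_type]
    rfl
  have h3 : ((Xᴴ * X).trace).re = ∑ i, ∑ j, Complex.normSq (X j i) := by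
    rw [h1, Complex.re_sum]
    refine Finset.sum_congr rfl fun i _ => ?_
    rw [Complex.re_sum]
    refine Finset.sum_congr rfl fun j _ => ?_
    rw [mul_comm, Complex.star_def, Complex.mul_conj, Complex.ofReal_re]
  rw [h2, h3, Finset.sum_comm]

lemma nsq_vec_sqrt {m : Type*} [Fintype m] [DecidableEq m] {M : Matrix m m ℂ}
    (hM : M.PosSemidef) : nsq (_root_.vec hM.sqrt) = (M.trace).re := by
  rw [nsq_vec, hM.posSemidef_sqrt.1, hM.sqrt_mul_self]

lemma ps_vec {m : Type*} [Fintype m] [DecidableEq m] {A B : Matrix m m ℂ}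
    (hA : A.PosSemidef) (hB : B.PosSemidef) :
    nsq (_root_.vec hA.sqrt - _root_.vec hB.sqrt) ≤ traceNorm (A - B) := by
  have h0 : _root_.vec hA.sqrt - _root_.vec hB.sqrt = _root_.vec (hA.sqrt - hB.sqrt) := funext fun p => rfl
  rw [h0, nsq_vec]
  have hherm : (hA.sqrt - hB.sqrt)ᴴ = hA.sqrt - hB.sqrt :=
    (hA.posSemidef_sqrt.1).sub (hB.posSemidef_sqrt.1)
  rw [hherm]
  exact powers_stormer hA hB

end Main

section Std
variable {κ : Type*} [Fintype κ] [DecidableEq κ]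

lemma single_star (i : κ) : star (Pi.single i 1 : κ → ℂ) = Pi.single i 1 := by
  funext j
  rw [Pi.star_apply, Pi.single_apply]
  split <;> simp

lemma std_psd (i : κ) : (single i i (1 : ℂ)).PosSemidef := by
  rw [single_eq_single_vecMulVec_single]
  have h := posSemidef_outer (Pi.single i 1 : κ → ℂ)
  rwa [single_star] at h

lemma std_tr (i : κ) : (single i i (1 : ℂ)).trace = 1 :=
  Matrix.trace_single_eq_same i (1 : ℂ)

lemma std_mul (i j : κ) : single i i (1 : ℂ) * single j j (1 : ℂ)
    = if i = j then single i i (1 : ℂ) else 0 := by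
  by_cases h : i = j
  · subst h
    rw [if_pos rfl, single_mul_single_same, one_mul]
  · rw [if_neg h]
    exact Matrix.single_mul_single_of_ne (c := (1 : ℂ)) i i j h (1 : ℂ)

lemma std2_psd (i : κ) :
    ((single i i (1 : ℂ)) ⊗ₖ (single i i (1 : ℂ))).PosSemidef :=
  posSemidef_kron (std_psd i) (std_psd i)

lemma std2_tr (i : κ) :
    ((single i i (1 : ℂ)) ⊗ₖ (single i i (1 : ℂ))).trace = 1 := by
  rw [trace_kronecker, std_tr, one_mul]

lemma std2_mul (i j : κ) :
    ((single i i (1 : ℂ)) ⊗ₖ (single i i (1 : ℂ)))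
      * ((single j j (1 : ℂ)) ⊗ₖ (single j j (1 : ℂ)))
    = if i = j then (single i i (1 : ℂ)) ⊗ₖ (single i i (1 : ℂ)) else 0 := by
  rw [← mul_kronecker_mul, std_mul]
  by_cases h : i = j
  · rw [if_pos h, if_pos h]
  · rw [if_neg h, if_neg h, Matrix.zero_kronecker]

end Std

section Final
variable {κ ι : Type*} [Fintype κ] [Fintype ι] [DecidableEq ι]

lemma final_bound (ψ φ : κ → ι → ℂ) (ε : ℝ) (hε : 0 ≤ ε)
    (ha : ∑ i, nrm (ψ i) ^ 2 ≤ 1) (hb : ∑ i, nrm (φ i) ^ 2 ≤ 1)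
    (ht : ∑ i, nrm (ψ i - φ i) ^ 2 ≤ 2 * ε) :
    ∑ i, traceNorm (outer (ψ i) - outer (φ i)) ≤ 2 * Real.sqrt (2 * ε) := by
  have h1 : ∑ i, traceNorm (outer (ψ i) - outer (φ i))
      ≤ ∑ i, (nrm (ψ i) + nrm (φ i)) * nrm (ψ i - φ i) :=
    Finset.sum_le_sum fun i _ => outer_diff_traceNorm_le (ψ i) (φ i)
  have hCS : (∑ i, (nrm (ψ i) + nrm (φ i)) * nrm (ψ i - φ i)) ^ 2
      ≤ (∑ i, (nrm (ψ i) + nrm (φ i)) ^ 2) * (∑ i, nrm (ψ i - φ i) ^ 2) :=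
    Finset.sum_mul_sq_le_sq_mul_sq _ _ _
  have hab : ∑ i, (nrm (ψ i) + nrm (φ i)) ^ 2 ≤ 4 := by
    have h2 : ∀ i : κ, (nrm (ψ i) + nrm (φ i)) ^ 2 ≤ 2 * (nrm (ψ i) ^ 2 + nrm (φ i) ^ 2) :=
      fun i => by nlinarith [sq_nonneg (nrm (ψ i) - nrm (φ i))]
    calc ∑ i, (nrm (ψ i) + nrm (φ i)) ^ 2
        ≤ ∑ i, 2 * (nrm (ψ i) ^ 2 + nrm (φ i) ^ 2) := Finset.sum_le_sum fun i _ => h2 i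
      _ = 2 * ((∑ i, nrm (ψ i) ^ 2) + ∑ i, nrm (φ i) ^ 2) := by
          rw [← Finset.sum_add_distrib, ← Finset.mul_sum]
      _ ≤ 4 := by linarith
  have habnn : 0 ≤ ∑ i, (nrm (ψ i) + nrm (φ i)) ^ 2 :=
    Finset.sum_nonneg fun i _ => sq_nonneg _
  have htnn : 0 ≤ ∑ i, nrm (ψ i - φ i) ^ 2 := Finset.sum_nonneg fun i _ => sq_nonneg _
  have hXnn : 0 ≤ ∑ i, (nrm (ψ i) + nrm (φ i)) * nrm (ψ i - φ i) :=
    Finset.sum_nonneg fun i _ =>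
      mul_nonneg (add_nonneg (nrm_nonneg _) (nrm_nonneg _)) (nrm_nonneg _)
  have hX2 : (∑ i, (nrm (ψ i) + nrm (φ i)) * nrm (ψ i - φ i)) ^ 2 ≤ 4 * (2 * ε) := by
    calc (∑ i, (nrm (ψ i) + nrm (φ i)) * nrm (ψ i - φ i)) ^ 2
        ≤ (∑ i, (nrm (ψ i) + nrm (φ i)) ^ 2) * (∑ i, nrm (ψ i - φ i) ^ 2) := hCS
      _ ≤ 4 * (2 * ε) := mul_le_mul hab ht htnn (by norm_num)
  have hX : ∑ i, (nrm (ψ i) + nrm (φ i)) * nrm (ψ i - φ i) ≤ 2 * Real.sqrt (2 * ε) := by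
    have h4 : (2 : ℝ) * Real.sqrt (2 * ε) = Real.sqrt (4 * (2 * ε)) := by
      rw [Real.sqrt_mul (by norm_num : (0:ℝ) ≤ 4), show Real.sqrt 4 = 2 by
        rw [show (4 : ℝ) = 2 ^ 2 by norm_num, Real.sqrt_sq (by norm_num : (0:ℝ) ≤ 2)]]
    rw [h4]
    exact (Real.le_sqrt hXnn (by positivity)).2 hX2
  linarith

end Final
end TNaux


/-- Proposition 2.6: canonical duplication is `√(2ε)`-Lipschitz in half trace
distance. -/
theorem duplication_lipschitz
    {n k : ℕ}
    (M M' : Fin k → Matrix (Fin n) (Fin n) ℂ)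
    (hM : ∀ i, (M i).PosSemidef) (hM' : ∀ i, (M' i).PosSemidef)
    (htr : ∑ i, ((M i).trace).re ≤ 1) (htr' : ∑ i, ((M' i).trace).re ≤ 1)
    (ε : ℝ) (hε : 0 ≤ ε)
    (hclose :
      (1 / 2) * traceNorm
        ((∑ i, Matrix.single i i (1 : ℂ) ⊗ₖ M i)
          - ∑ i, Matrix.single i i (1 : ℂ) ⊗ₖ M' i) ≤ ε) :
    (1 / 2) * traceNorm
        ((∑ i, (Matrix.single i i (1 : ℂ) ⊗ₖ Matrix.single i i (1 : ℂ))
            ⊗ₖ outer (_root_.vec (hM i).sqrt))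
          - ∑ i, (Matrix.single i i (1 : ℂ) ⊗ₖ Matrix.single i i (1 : ℂ))
            ⊗ₖ outer (_root_.vec (hM' i).sqrt)) ≤ Real.sqrt (2 * ε) := by
  have e1 : (∑ i, Matrix.single i i (1 : ℂ) ⊗ₖ M i)
      - ∑ i, Matrix.single i i (1 : ℂ) ⊗ₖ M' i
      = ∑ i, Matrix.single i i (1 : ℂ) ⊗ₖ (M i - M' i) := by
    rw [← Finset.sum_sub_distrib]
    exact Finset.sum_congr rfl fun i _ => (TNaux.kron_sub _ _ _).symm
  have hstep1 : ∑ i, traceNorm (M i - M' i) ≤ 2 * ε := by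
    have e2 := TNaux.traceNorm_sum_kron (fun i : Fin k => Matrix.single i i (1 : ℂ))
      (fun i => M i - M' i) TNaux.std_psd TNaux.std_tr TNaux.std_mul
    rw [e1, e2] at hclose
    linarith
  have e3 : (∑ i, (Matrix.single i i (1 : ℂ) ⊗ₖ Matrix.single i i (1 : ℂ))
        ⊗ₖ outer (_root_.vec (hM i).sqrt))
      - ∑ i, (Matrix.single i i (1 : ℂ) ⊗ₖ Matrix.single i i (1 : ℂ))
        ⊗ₖ outer (_root_.vec (hM' i).sqrt)
      = ∑ i, (Matrix.single i i (1 : ℂ) ⊗ₖ Matrix.single i i (1 : ℂ))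
        ⊗ₖ (outer (_root_.vec (hM i).sqrt) - outer (_root_.vec (hM' i).sqrt)) := by
    rw [← Finset.sum_sub_distrib]
    exact Finset.sum_congr rfl fun i _ => (TNaux.kron_sub _ _ _).symm
  have e4 := TNaux.traceNorm_sum_kron
    (fun i : Fin k => Matrix.single i i (1 : ℂ) ⊗ₖ Matrix.single i i (1 : ℂ))
    (fun i => outer (_root_.vec (hM i).sqrt) - outer (_root_.vec (hM' i).sqrt))
    TNaux.std2_psd TNaux.std2_tr TNaux.std2_mul
  rw [e3, e4]
  have ha : ∑ i, TNaux.nrm (_root_.vec (hM i).sqrt) ^ 2 ≤ 1 := by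
    calc ∑ i, TNaux.nrm (_root_.vec (hM i).sqrt) ^ 2
        = ∑ i, ((M i).trace).re := Finset.sum_congr rfl fun i _ => by
          rw [TNaux.nrm_sq, TNaux.nsq_vec_sqrt (hM i)]
      _ ≤ 1 := htr
  have hb : ∑ i, TNaux.nrm (_root_.vec (hM' i).sqrt) ^ 2 ≤ 1 := by
    calc ∑ i, TNaux.nrm (_root_.vec (hM' i).sqrt) ^ 2
        = ∑ i, ((M' i).trace).re := Finset.sum_congr rfl fun i _ => by
          rw [TNaux.nrm_sq, TNaux.nsq_vec_sqrt (hM' i)]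
      _ ≤ 1 := htr'
  have ht : ∑ i, TNaux.nrm (_root_.vec (hM i).sqrt - _root_.vec (hM' i).sqrt) ^ 2 ≤ 2 * ε := by
    calc ∑ i, TNaux.nrm (_root_.vec (hM i).sqrt - _root_.vec (hM' i).sqrt) ^ 2
        ≤ ∑ i, traceNorm (M i - M' i) := Finset.sum_le_sum fun i _ => by
          rw [TNaux.nrm_sq]
          exact TNaux.ps_vec (hM i) (hM' i)
      _ ≤ 2 * ε := hstep1
  have hfin := TNaux.final_bound (fun i => _root_.vec (hM i).sqrt) (fun i => _root_.vec (hM' i).sqrt)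
    ε hε ha hb ht
  calc (1 / 2) * ∑ i, traceNorm (outer (_root_.vec (hM i).sqrt) - outer (_root_.vec (hM' i).sqrt))
      ≤ (1 / 2) * (2 * Real.sqrt (2 * ε)) := by linarith [hfin]
    _ = Real.sqrt (2 * ε) := by ring
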